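/- Let G be a graph containing an induced cycle C = (x_1, ..., x_k) of length k ≥ 4. Then {x_1, x_2, x_k} is a weighted asteroidal triple of the adjacency matrix A_G of G. -/

import Mathlib

/-- The consecutive pairs of `l` avoid `z` with respect to the matrix `A`. -/
def AvoidChain {V : Type*} (A : V → V → ℝ) (z : V) (l : List V) : Prop :=
  l.Chain' fun u w => min (A u z) (A w z) < A u w

/-- `l` is a path from `x` to `y` avoiding `z` in `A`: a sequence of distinct
elements starting at `x`, ending at `y`, each consecutive pair avoiding `z`. -/
def AvoidPath {V : Type*} (A : V → V → ℝ) (z x y : V) (l : List V) : Prop :=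
  l.Nodup ∧ l.head? = some x ∧ l.getLast? = some y ∧ AvoidChain A z l

/-- `x ~^z y`: there is a path from `x` to `y` avoiding `z` in `A`. -/
def Avoids {V : Type*} (A : V → V → ℝ) (z x y : V) : Prop :=
  ∃ l, AvoidPath A z x y l

/-- `{x,y,z}` is a weighted asteroidal triple of `A`. -/
def IsWAT {V : Type*} (A : V → V → ℝ) (x y z : V) : Prop :=
  x ≠ y ∧ y ≠ z ∧ x ≠ z ∧ Avoids A z x y ∧ Avoids A x y z ∧ Avoids A y z x

/-- `π` is a Robinson ordering of `A`. -/
def IsRobinsonOrdering {V : Type*} [Fintype V] (A : V → V → ℝ)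
    (π : Fin (Fintype.card V) ≃ V) : Prop :=
  ∀ i j k : Fin (Fintype.card V), i < j → j < k →
    A (π i) (π k) ≤ min (A (π i) (π j)) (A (π j) (π k))

/-- `A` is Robinsonian: it admits a Robinson ordering. -/
def Robinsonian {V : Type*} [Fintype V] (A : V → V → ℝ) : Prop :=
  ∃ π : Fin (Fintype.card V) ≃ V, IsRobinsonOrdering A π

theorem stmt_16 {V : Type*} (G : SimpleGraph V) [DecidableRel G.Adj]
    (k : ℕ) (hk : 4 ≤ k) (c : Fin k → V) (hinj : Function.Injective c)
    (hcyc : ∀ i j : Fin k,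
      G.Adj (c i) (c j) ↔ ((j : ℕ) = ((i : ℕ) + 1) % k ∨ (i : ℕ) = ((j : ℕ) + 1) % k)) :
    IsWAT (fun u v : V => if G.Adj u v then (1 : ℝ) else 0)
      (c ⟨0, by omega⟩) (c ⟨1, by omega⟩) (c ⟨k - 1, by omega⟩) := by
  have hk0 : 0 < k := by omega
  set A : V → V → ℝ := fun u v => if G.Adj u v then (1 : ℝ) else 0 with hA
  have havoidR : ∀ u v z : V, G.Adj u v → ¬ G.Adj v z → min (A u z) (A v z) < A u v := by
    intro u v z h1 h3
    by_cases h2 : G.Adj u z <;> simp [hA, h1, h2, h3]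
  have havoidL : ∀ u v z : V, G.Adj u v → ¬ G.Adj u z → min (A u z) (A v z) < A u v := by
    intro u v z h1 h2
    by_cases h3 : G.Adj v z <;> simp [hA, h1, h2, h3]
  have hadj_succ : ∀ (a : ℕ) (h : a + 1 < k),
      G.Adj (c ⟨a, by omega⟩) (c ⟨a + 1, h⟩) := by
    intro a h
    rw [hcyc]
    left
    simp [Nat.mod_eq_of_lt h]
  have hadj_0k : G.Adj (c ⟨0, by omega⟩) (c ⟨k - 1, by omega⟩) := by
    rw [hcyc]
    right
    have h1 : k - 1 + 1 = k := by omega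
    simp [h1, Nat.mod_self]
  have hnon0 : ∀ (i : ℕ) (h1 : 2 ≤ i) (h2 : i ≤ k - 2),
      ¬ G.Adj (c ⟨i, by omega⟩) (c ⟨0, by omega⟩) := by
    intro i h1 h2 h
    rw [hcyc] at h
    simp only at h
    rcases h with h | h
    · rw [Nat.mod_eq_of_lt (by omega)] at h; omega
    · rw [Nat.mod_eq_of_lt (by omega)] at h; omega
  have hnon1k : ¬ G.Adj (c ⟨1, by omega⟩) (c ⟨k - 1, by omega⟩) := by
    intro h
    rw [hcyc] at h
    simp only at h
    rcases h with h | h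
    · rw [Nat.mod_eq_of_lt (by omega)] at h; omega
    · rw [show k - 1 + 1 = k by omega, Nat.mod_self] at h; omega
  have hne : ∀ (a b : ℕ) (ha : a < k) (hb : b < k), a ≠ b →
      c ⟨a, ha⟩ ≠ c ⟨b, hb⟩ := by
    intro a b ha hb hab h
    exact hab (by simpa [Fin.ext_iff] using hinj h)
  refine ⟨hne 0 1 (by omega) (by omega) (by omega),
    hne 1 (k - 1) (by omega) (by omega) (by omega),
    hne 0 (k - 1) (by omega) (by omega) (by omega), ?_, ?_, ?_⟩
  · -- path from c 0 to c 1 avoiding c (k-1) : [c 0, c 1]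
    refine ⟨[c ⟨0, by omega⟩, c ⟨1, by omega⟩], ?_, rfl, rfl, ?_⟩
    · simp [hne 0 1 (by omega) (by omega) (by omega)]
    · refine List.isChain_pair.mpr ?_
      exact havoidR _ _ _ (hadj_succ 0 (by omega)) hnon1k
  · -- path from c 1 to c (k-1) avoiding c 0
    set f : ℕ → V := fun m => c ⟨(m + 1) % k, Nat.mod_lt _ hk0⟩ with hfdef
    have hf : ∀ (m : ℕ) (h : m + 1 < k), f m = c ⟨m + 1, h⟩ := by
      intro m h
      simp [hfdef, Fin.ext_iff, Nat.mod_eq_of_lt h]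
    refine ⟨(List.range (k - 1)).map f, ?_, ?_, ?_, ?_⟩
    · refine List.Nodup.map_on ?_ List.nodup_range
      intro a ha b hb hab
      rw [List.mem_range] at ha hb
      have := hinj hab
      rw [Fin.ext_iff] at this
      simp only [Nat.mod_eq_of_lt (show a + 1 < k by omega),
        Nat.mod_eq_of_lt (show b + 1 < k by omega)] at this
      omega
    · rw [List.head?_map,
        show List.range (k - 1) = 0 :: List.map Nat.succ (List.range (k - 2)) by
          rw [show k - 1 = (k - 2) + 1 by omega, List.range_succ_eq_map]]
      simp only [List.head?_cons, Option.map_some]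
      rw [hf 0 (by omega)]
    · rw [List.getLast?_map,
        show List.range (k - 1) = List.range (k - 2) ++ [k - 2] by
          rw [show k - 1 = (k - 2) + 1 by omega, List.range_succ],
        List.getLast?_concat]
      simp only [Option.map_some]
      rw [hf (k - 2) (by omega)]
      have h2 : (⟨k - 2 + 1, by omega⟩ : Fin k) = ⟨k - 1, by omega⟩ := by
        simp only [Fin.mk.injEq]; omega
      rw [h2]
    · rw [AvoidChain, List.Chain', List.isChain_map,
        show List.range (k - 1) = List.range ((k - 2).succ) by
          congr 1; omega,
        List.isChain_range_succ]
      intro m hm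
      rw [hf m (by omega), hf (m + 1) (by omega)]
      rcases Nat.eq_zero_or_pos m with h0 | h0
      · subst h0
        refine havoidR _ _ _ ?_ ?_
        · exact hadj_succ 1 (by omega)
        · exact hnon0 2 (by omega) (by omega)
      · refine havoidL _ _ _ ?_ ?_
        · exact hadj_succ (m + 1) (by omega)
        · exact hnon0 (m + 1) (by omega) (by omega)
  · -- path from c (k-1) to c 0 avoiding c 1 : [c (k-1), c 0]
    refine ⟨[c ⟨k - 1, by omega⟩, c ⟨0, by omega⟩], ?_, rfl, rfl, ?_⟩
    · simp [hne (k - 1) 0 (by omega) (by omega) (by omega)]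
    · refine List.isChain_pair.mpr ?_
      refine havoidL _ _ _ hadj_0k.symm ?_
      exact fun h => hnon1k h.symm
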